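/- Let A be a bialgebra over R coacting on B via α, χ : B → R a character, and π : A → A' a bialgebra morphism with π((χ ⊗ id)α(b)) = χ(b)·1 for all b. Then for every b ∈ B, the element a = (χ ⊗ id)(α(b)) satisfies (π ⊗ id)(Δ(a)) = 1 ⊗ a. -/
import Mathlib


open TensorProduct

/-- If the quantum subgroup determined by a bialgebra morphism `π : A → A'` fixes the
point `χ`, then the elements `a = (χ ⊗ id)α(b)` are left-coinvariant with respect to
`π`: `(π ⊗ id)(Δ a) = 1 ⊗ a`. -/
theorem orbit_map_lands_in_coinvariants
    {R A A' B : Type*} [CommRing R] [Ring A] [Bialgebra R A] [Ring A']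
    [Bialgebra R A'] [Ring B] [Algebra R B]
    (α : B →ₗ[R] B ⊗[R] A)
    (hcoassoc : ∀ b : B,
      (TensorProduct.assoc R B A A)
          (TensorProduct.map α (LinearMap.id : A →ₗ[R] A) (α b)) =
        TensorProduct.map (LinearMap.id : B →ₗ[R] B) (Coalgebra.comul (R := R)) (α b))
    (hcounit : ∀ b : B,
      (TensorProduct.rid R B)
          (TensorProduct.map (LinearMap.id : B →ₗ[R] B)
            (Coalgebra.counit (R := R) (A := A)) (α b)) = b)
    (χ : B →ₐ[R] R) (π : A →ₐ[R] A')
    (hπΔ : ∀ a : A,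
      TensorProduct.map π.toLinearMap π.toLinearMap (Coalgebra.comul a) =
        Coalgebra.comul (R := R) (π a))
    (hfix : ∀ b : B,
      π ((TensorProduct.lid R A)
          (TensorProduct.map χ.toLinearMap (LinearMap.id : A →ₗ[R] A) (α b))) =
        χ b • (1 : A')) :
    ∀ b : B,
      TensorProduct.map π.toLinearMap (LinearMap.id : A →ₗ[R] A)
          (Coalgebra.comul (R := R)
            ((TensorProduct.lid R A)
              (TensorProduct.map χ.toLinearMap (LinearMap.id : A →ₗ[R] A) (α b)))) =
        (1 : A') ⊗ₜ[R]
          ((TensorProduct.lid R A)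
            (TensorProduct.map χ.toLinearMap (LinearMap.id : A →ₗ[R] A) (α b))) := by
  intro b
  set Φ : B ⊗[R] A →ₗ[R] A :=
    (TensorProduct.lid R A).toLinearMap ∘ₗ
      TensorProduct.map χ.toLinearMap (LinearMap.id : A →ₗ[R] A) with hΦ
  set K : B ⊗[R] (A ⊗[R] A) →ₗ[R] A ⊗[R] A :=
    (TensorProduct.lid R (A ⊗[R] A)).toLinearMap ∘ₗ
      TensorProduct.map χ.toLinearMap (LinearMap.id : A ⊗[R] A →ₗ[R] A ⊗[R] A) with hK
  have lemA : (Coalgebra.comul (R := R) (A := A)) ∘ₗ Φ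
      = K ∘ₗ TensorProduct.map (LinearMap.id : B →ₗ[R] B)
          (Coalgebra.comul (R := R) (A := A)) := by
    apply TensorProduct.ext'
    intro x y
    simp [hΦ, hK]
  have lemB : K ∘ₗ (TensorProduct.assoc R B A A).toLinearMap
      = TensorProduct.map Φ (LinearMap.id : A →ₗ[R] A) := by
    apply TensorProduct.ext_threefold
    intro x y z
    simp [hΦ, hK, TensorProduct.smul_tmul']
  have lemC : TensorProduct.map (π.toLinearMap ∘ₗ Φ ∘ₗ α) (LinearMap.id : A →ₗ[R] A)
      = (TensorProduct.mk R A' A 1) ∘ₗ Φ := by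
    apply TensorProduct.ext'
    intro x y
    have hx := hfix x
    simp only [hΦ, TensorProduct.map_tmul, LinearMap.comp_apply, LinearMap.id_coe, id_eq,
      TensorProduct.mk_apply, AlgHom.toLinearMap_apply, LinearEquiv.coe_coe]
    rw [hx, TensorProduct.smul_tmul]
    simp
  have step1 : Coalgebra.comul (R := R) (Φ (α b)) = K
      (TensorProduct.map (LinearMap.id : B →ₗ[R] B) (Coalgebra.comul (R := R)) (α b)) :=
    congrFun (congrArg DFunLike.coe lemA) (α b)
  have step2 := (hcoassoc b).symm
  have step3 : K ((TensorProduct.assoc R B A A)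
      (TensorProduct.map α (LinearMap.id : A →ₗ[R] A) (α b)))
      = TensorProduct.map Φ (LinearMap.id : A →ₗ[R] A)
          (TensorProduct.map α (LinearMap.id : A →ₗ[R] A) (α b)) :=
    congrFun (congrArg DFunLike.coe lemB)
      (TensorProduct.map α (LinearMap.id : A →ₗ[R] A) (α b))
  have step4 : TensorProduct.map π.toLinearMap (LinearMap.id : A →ₗ[R] A)
      (TensorProduct.map Φ (LinearMap.id : A →ₗ[R] A)
        (TensorProduct.map α (LinearMap.id : A →ₗ[R] A) (α b)))
      = TensorProduct.map (π.toLinearMap ∘ₗ Φ ∘ₗ α) (LinearMap.id : A →ₗ[R] A) (α b) := by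
    have hcomp : TensorProduct.map π.toLinearMap (LinearMap.id : A →ₗ[R] A) ∘ₗ
        (TensorProduct.map Φ (LinearMap.id : A →ₗ[R] A) ∘ₗ
          TensorProduct.map α (LinearMap.id : A →ₗ[R] A))
        = TensorProduct.map (π.toLinearMap ∘ₗ Φ ∘ₗ α) (LinearMap.id : A →ₗ[R] A) := by
      apply TensorProduct.ext'
      intro x y
      simp
    exact congrFun (congrArg DFunLike.coe hcomp) (α b)
  have goalΦ : (TensorProduct.lid R A)
      (TensorProduct.map χ.toLinearMap (LinearMap.id : A →ₗ[R] A) (α b)) = Φ (α b) := rfl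
  rw [goalΦ, step1, step2, step3, step4, lemC]
  rfl
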